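/- For every nonempty set Γ of countable graphs each containing an infinite path, and every infinite cardinal λ, the weak complexity of Forb(Γ) restricted to graphs of cardinality λ is at least λ⁺: for any family ℱ of at most λ graphs (each omitting all members of Γ as subgraphs and of cardinality λ), there is a graph H of cardinality λ omitting all members of Γ that is not isomorphic to a subgraph of any member of ℱ. -/

import Mathlib

/-- `G` has a (not necessarily induced) subgraph isomorphic to `H`. -/
def HasSubgraphCopy {V W : Type*} (G : SimpleGraph V) (H : SimpleGraph W) : Prop :=
  ∃ f : W → V, Function.Injective f ∧ ∀ a b, H.Adj a b → G.Adj (f a) (f b)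

/-- `G` contains a one-way infinite path. -/
def HasRay {V : Type*} (G : SimpleGraph V) : Prop :=
  ∃ f : ℕ → V, Function.Injective f ∧ ∀ n, G.Adj (f n) (f (n + 1))

/-- `G` has no subgraph isomorphic to a member of `Γ`. -/
def OmitsAll {V : Type*} (G : SimpleGraph V) (Γ : Set (SimpleGraph ℕ)) : Prop :=
  ∀ H ∈ Γ, ¬ HasSubgraphCopy G H

namespace WCAux


/-- `l` is a partial copy of `H₀` in `G`. -/
def Good {V : Type*} (G : SimpleGraph V) (H₀ : SimpleGraph ℕ) (l : List V) : Prop :=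
  l.Nodup ∧ ∀ (m n : ℕ) (hm : m < l.length) (hn : n < l.length),
    H₀.Adj m n → G.Adj (l[m]'hm) (l[n]'hn)

lemma good_nil {V : Type*} (G : SimpleGraph V) (H₀ : SimpleGraph ℕ) : Good G H₀ [] :=
  ⟨List.nodup_nil, by intro m n hm hn; simp at hm⟩

lemma good_take {V : Type*} {G : SimpleGraph V} {H₀ : SimpleGraph ℕ} {l : List V}
    (h : Good G H₀ l) (k : ℕ) : Good G H₀ (l.take k) := by
  refine ⟨h.1.sublist (List.take_sublist k l), ?_⟩
  intro m n hm hn hadj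
  have hm' : m < l.length := lt_of_lt_of_le hm (by simp [List.length_take])
  have hn' : n < l.length := lt_of_lt_of_le hn (by simp [List.length_take])
  have e1 : (l.take k)[m]'hm = l[m]'hm' := List.IsPrefix.getElem (List.take_prefix k l) hm
  have e2 : (l.take k)[n]'hn = l[n]'hn' := List.IsPrefix.getElem (List.take_prefix k l) hn
  rw [e1, e2]
  exact h.2 m n hm' hn' hadj

/-- An infinite increasing chain of good lists gives a copy of `H₀`. -/
lemma no_good_chain {V : Type*} (G : SimpleGraph V) (H₀ : SimpleGraph ℕ)
    (hom : ¬ HasSubgraphCopy G H₀) (c : ℕ → List V)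
    (hg : ∀ n, Good G H₀ (c n)) (hlen : ∀ n, (c n).length = n)
    (hpre : ∀ n, c n <+: c (n + 1)) : False := by
  have hmono : ∀ {a b : ℕ}, a ≤ b → c a <+: c b := by
    intro a b h
    induction b, h using Nat.le_induction with
    | base => exact List.prefix_refl _
    | succ b hb ih => exact ih.trans (hpre b)
  have hlt : ∀ n N, n < N → n < (c N).length := fun n N h => by rw [hlen]; omega
  let g : ℕ → V := fun n => (c (n + 1))[n]'(hlt n (n + 1) (by omega))
  have key : ∀ (m N : ℕ) (h : m < N), g m = (c N)[m]'(hlt m N h) := by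
    intro m N h
    exact List.IsPrefix.getElem (hmono (by omega : m + 1 ≤ N)) _
  have ginj : Function.Injective g := by
    intro m n hmn
    have hm : m < max m n + 1 := by omega
    have hn : n < max m n + 1 := by omega
    rw [key m _ hm, key n _ hn] at hmn
    exact ((hg _).1.getElem_inj_iff).mp hmn
  refine hom ⟨g, ginj, ?_⟩
  intro m n hadj
  have hm : m < max m n + 1 := by omega
  have hn : n < max m n + 1 := by omega
  rw [key m _ hm, key n _ hn]
  exact (hg _).2 m n _ _ hadj

lemma take_eq_of_prefix {V : Type*} {a b : List V} (hab : a <+: b) {K : ℕ}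
    (hK : K ≤ a.length) : a.take K = b.take K := by
  rw [List.prefix_iff_eq_take.mp hab, List.take_take, min_eq_left hK]

/-- From an injective sequence of pairwise-consecutively-comparable lists, extract an
increasing chain of prefixes of its members, of all lengths. -/
lemma chain_of_ray {V : Type*} (t : ℕ → List V)
    (tinj : Function.Injective t)
    (tcomp : ∀ n, t n <+: t (n + 1) ∨ t (n + 1) <+: t n) :
    ∃ c : ℕ → List V, (∀ K, (c K).length = K) ∧ (∀ K, c K <+: c (K + 1)) ∧
      (∀ K, ∃ n, c K = (t n).take K) := by
  -- in a region where all lengths are ≥ K, the take-K is constant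
  have htake : ∀ (K N : ℕ), (∀ n, N ≤ n → K ≤ (t n).length) →
      ∀ p q, N ≤ p → p ≤ q → (t p).take K = (t q).take K := by
    intro K N hN p q hp hpq
    induction q, hpq using Nat.le_induction with
    | base => rfl
    | succ q hq ih =>
      refine ih.trans ?_
      rcases tcomp q with h | h
      · exact take_eq_of_prefix h (hN q (by omega))
      · exact (take_eq_of_prefix h (hN (q + 1) (by omega))).symm
  have growth : ∀ K : ℕ, ∃ N, ∀ n, N ≤ n → K ≤ (t n).length := by
    intro K
    induction K with
    | zero => exact ⟨0, fun n _ => Nat.zero_le _⟩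
    | succ K ih =>
      obtain ⟨N, hN⟩ := ih
      by_contra hcon
      push_neg at hcon
      obtain ⟨p, hp, hp2⟩ := hcon N
      obtain ⟨q, hq, hq2⟩ := hcon (p + 1)
      have hpl : (t p).length = K := by have := hN p hp; omega
      have hql : (t q).length = K := by have := hN q (by omega); omega
      have : (t p).take K = (t q).take K := htake K N hN p q hp (by omega)
      rw [List.take_of_length_le (le_of_eq hpl), List.take_of_length_le (le_of_eq hql)] at this
      have := tinj this
      omega
  choose NN hNN using growth
  refine ⟨fun K => (t (NN K)).take K, ?_, ?_, fun K => ⟨NN K, rfl⟩⟩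
  · intro K
    show ((t (NN K)).take K).length = K
    rw [List.length_take, min_eq_left (hNN K (NN K) le_rfl)]
  · intro K
    show (t (NN K)).take K <+: (t (NN (K+1))).take (K + 1)
    set n := max (NN K) (NN (K + 1)) with hn
    have e1 : (t (NN K)).take K = (t n).take K :=
      htake K (NN K) (hNN K) (NN K) n le_rfl (le_max_left _ _)
    have e2 : (t (NN (K + 1))).take (K + 1) = (t n).take (K + 1) :=
      htake (K + 1) (NN (K + 1)) (hNN (K + 1)) (NN (K + 1)) n le_rfl (le_max_right _ _)
    rw [e1, e2]
    have : (t n).take K = ((t n).take (K + 1)).take K := by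
      rw [List.take_take, min_eq_left (by omega)]
    rw [this]
    exact List.take_prefix _ _


variable {U ι : Type*}


/-- Tagged partial copies of `H₀`. -/
def Attempts (G' : ι → SimpleGraph U) (H₀ : SimpleGraph ℕ) : Type _ :=
  {p : ι × List U // Good (G' p.1) H₀ p.2}

/-- `b`'s list properly extends `a`'s list (same tag), with an edge decoration from `H₀`. -/
def NRel (G' : ι → SimpleGraph U) (H₀ : SimpleGraph ℕ) (a b : Attempts G' H₀) : Prop :=
  a.1.1 = b.1.1 ∧ a.1.2 <+: b.1.2 ∧ H₀.Adj a.1.2.length b.1.2.length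

/-- The diagonal graph: decorated tree of attempts, plus isolated padding vertices. -/
def BigGraph (G' : ι → SimpleGraph U) (H₀ : SimpleGraph ℕ) :
    SimpleGraph (Attempts G' H₀ ⊕ U) where
  Adj x y := ∃ a b, x = Sum.inl a ∧ y = Sum.inl b ∧
    (NRel G' H₀ a b ∨ NRel G' H₀ b a)
  symm := by
    constructor
    rintro x y ⟨a, b, hx, hy, h⟩
    exact ⟨b, a, hy, hx, h.symm⟩
  loopless := by
    constructor
    rintro x ⟨a, b, hx, hy, h⟩
    have hab : a = b := Sum.inl_injective (hx ▸ hy ▸ rfl : (Sum.inl a : _ ⊕ U) = Sum.inl b)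
    subst hab
    rcases h with h | h <;> exact H₀.loopless.irrefl _ h.2.2

lemma bigGraph_adj (G' : ι → SimpleGraph U) (H₀ : SimpleGraph ℕ) (x y) :
    (BigGraph G' H₀).Adj x y ↔ ∃ a b, x = Sum.inl a ∧ y = Sum.inl b ∧
      (NRel G' H₀ a b ∨ NRel G' H₀ b a) := Iff.rfl

lemma bigGraph_no_ray (G' : ι → SimpleGraph U) (H₀ : SimpleGraph ℕ)
    (hom : ∀ i, ¬ HasSubgraphCopy (G' i) H₀) : ¬ HasRay (BigGraph G' H₀) := by
  rintro ⟨q, qinj, qadj⟩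
  have hex : ∀ n, ∃ a : Attempts G' H₀, q n = Sum.inl a := by
    intro n
    obtain ⟨a, b, hx, hy, h⟩ := qadj n
    exact ⟨a, hx⟩
  choose a ha using hex
  have hrel : ∀ n, NRel G' H₀ (a n) (a (n + 1)) ∨ NRel G' H₀ (a (n + 1)) (a n) := by
    intro n
    obtain ⟨a', b', hx, hy, h⟩ := qadj n
    have h1 : a' = a n := Sum.inl_injective ((ha n) ▸ hx : (Sum.inl (a n) : _ ⊕ U) = _).symm
    have h2 : b' = a (n + 1) := Sum.inl_injective ((ha (n + 1)) ▸ hy :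
      (Sum.inl (a (n + 1)) : _ ⊕ U) = _).symm
    rw [h1, h2] at h
    exact h
  have hio : ∀ n, (a n).1.1 = (a 0).1.1 := by
    intro n
    induction n with
    | zero => rfl
    | succ n ih =>
      rcases hrel n with h | h
      · exact h.1 ▸ ih
      · exact h.1.symm ▸ ih
  set i₀ := (a 0).1.1
  set t : ℕ → List U := fun n => (a n).1.2 with ht
  have tinj : Function.Injective t := by
    intro m n hmn
    apply qinj
    rw [ha m, ha n]
    congr 1
    exact Subtype.ext (Prod.ext (by rw [hio m, hio n]) hmn)
  have tcomp : ∀ n, t n <+: t (n + 1) ∨ t (n + 1) <+: t n := by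
    intro n
    rcases hrel n with h | h
    · exact Or.inl h.2.1
    · exact Or.inr h.2.1
  have hgood : ∀ n, Good (G' i₀) H₀ (t n) := by
    intro n
    have := (a n).2
    rwa [hio n] at this
  obtain ⟨c, hlen, hpre, hsub⟩ := chain_of_ray t tinj tcomp
  refine no_good_chain (G' i₀) H₀ (hom i₀) c ?_ hlen hpre
  intro n
  obtain ⟨m, hm⟩ := hsub n
  rw [hm]
  exact good_take (hgood m) n


lemma bigGraph_no_copy (G' : ι → SimpleGraph U) (H₀ : SimpleGraph ℕ) (j : ι)
    (hom : ¬ HasSubgraphCopy (G' j) H₀) :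
    ¬ HasSubgraphCopy (G' j) (BigGraph G' H₀) := by
  rintro ⟨f, finj, fadj⟩
  -- the "shadow" map: a good list maps to the list of f-images of the tagged prefixes
  let node : (l : List U) → Good (G' j) H₀ l → Attempts G' H₀ :=
    fun l hl => ⟨(j, l), hl⟩
  let Phi : (l : List U) → Good (G' j) H₀ l → List U :=
    fun l hl => (List.range (l.length + 1)).map
      (fun k => f (Sum.inl (node (l.take k) (good_take hl k))))
  have hPhiLen : ∀ l hl, (Phi l hl).length = l.length + 1 := by
    intro l hl
    simp [Phi]
  have hPhiGet : ∀ l hl (m : ℕ) (hm : m < (Phi l hl).length),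
      (Phi l hl)[m]'hm = f (Sum.inl (node (l.take m) (good_take hl m))) := by
    intro l hl m hm
    simp [Phi]
  have hTakeLen : ∀ (l : List U) (m : ℕ), m ≤ l.length → (l.take m).length = m := by
    intro l m hm
    rw [List.length_take, min_eq_left hm]
  -- Phi l is good
  have hPhiGood : ∀ l hl, Good (G' j) H₀ (Phi l hl) := by
    intro l hl
    constructor
    · refine List.Nodup.map_on ?_ List.nodup_range
      intro x hx y hy hxy
      have hx' : x ≤ l.length := by have := List.mem_range.mp hx; omega
      have hy' : y ≤ l.length := by have := List.mem_range.mp hy; omega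
      have := congrArg (fun p : Attempts G' H₀ ⊕ U => p) (finj hxy)
      have h2 : node (l.take x) (good_take hl x) = node (l.take y) (good_take hl y) :=
        Sum.inl_injective (finj hxy)
      have h3 : l.take x = l.take y := congrArg (fun p => p.1.2) h2
      have := congrArg List.length h3
      rwa [hTakeLen l x (by omega), hTakeLen l y (by omega)] at this
    · intro m n hm hn hadj
      rw [hPhiLen l hl] at hm hn
      have hm' : m ≤ l.length := by omega
      have hn' : n ≤ l.length := by omega
      simp only [Phi, List.getElem_map, List.getElem_range]
      apply fadj
      rw [bigGraph_adj]
      refine ⟨_, _, rfl, rfl, ?_⟩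
      rcases lt_or_gt_of_ne (H₀.ne_of_adj hadj) with hlt | hlt
      · refine Or.inl ⟨rfl, ?_, ?_⟩
        · show l.take m <+: l.take n
          have : l.take m = (l.take n).take m := by
            rw [List.take_take, min_eq_left (by omega)]
          rw [this]
          exact List.take_prefix _ _
        · show H₀.Adj (l.take m).length (l.take n).length
          rw [hTakeLen l m hm', hTakeLen l n hn']
          exact hadj
      · refine Or.inr ⟨rfl, ?_, ?_⟩
        · show l.take n <+: l.take m
          have : l.take n = (l.take m).take n := by
            rw [List.take_take, min_eq_left (by omega)]
          rw [this]
          exact List.take_prefix _ _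
        · show H₀.Adj (l.take n).length (l.take m).length
          rw [hTakeLen l n hn', hTakeLen l m hm']
          exact hadj.symm
  -- Phi is monotone for the prefix order
  have hPhiMono : ∀ l hl l' hl', l <+: l' → Phi l hl <+: Phi l' hl' := by
    intro l hl l' hl' hpre
    have hKK : l.length ≤ l'.length := hpre.length_le
    have htk : ∀ k : ℕ, k ≤ l.length → l.take k = l'.take k := by
      intro k hk
      exact take_eq_of_prefix hpre hk
    have : Phi l hl = (Phi l' hl').take (l.length + 1) := by
      show (List.range (l.length + 1)).map _ = _
      rw [show (Phi l' hl').take (l.length + 1)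
            = ((List.range (l'.length + 1)).take (l.length + 1)).map
              (fun k => f (Sum.inl (node (l'.take k) (good_take hl' k)))) from
          List.map_take.symm]
      rw [List.take_range, min_eq_left (by omega)]
      apply List.map_congr_left
      intro k hk
      have hk' : k ≤ l.length := by have := List.mem_range.mp hk; omega
      congr 1
      apply congrArg
      exact Subtype.ext (Prod.ext rfl (htk k hk'))
    rw [this]
    exact List.take_prefix _ _
  -- build the chain
  let c : ℕ → {l : List U // Good (G' j) H₀ l} := fun n =>
    Nat.rec ⟨[], good_nil (G' j) H₀⟩ (fun _ p => ⟨Phi p.1 p.2, hPhiGood p.1 p.2⟩) n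
  have hc0 : c 0 = ⟨[], good_nil (G' j) H₀⟩ := rfl
  have hcs : ∀ n, c (n + 1) = ⟨Phi (c n).1 (c n).2, hPhiGood (c n).1 (c n).2⟩ :=
    fun n => rfl
  have hclen : ∀ n, ((c n).1).length = n := by
    intro n
    induction n with
    | zero => rfl
    | succ n ih =>
      rw [hcs n]
      show (Phi (c n).1 (c n).2).length = n + 1
      rw [hPhiLen _ (c n).2, ih]
  have hcpre : ∀ n, (c n).1 <+: (c (n + 1)).1 := by
    intro n
    induction n with
    | zero => rw [hc0]; exact List.nil_prefix
    | succ n ih =>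
      rw [hcs n, hcs (n + 1)]
      exact hPhiMono _ (c n).2 _ (c (n+1)).2 ih
  exact no_good_chain (G' j) H₀ hom (fun n => (c n).1) (fun n => (c n).2) hclen hcpre


end WCAux

open WCAux

/-- For every nonempty set `Γ` of countable graphs, each containing an infinite path,
and every infinite cardinal `λ`, the weak complexity of `Forb(Γ)` at `λ` is at least
`λ⁺`: no family of at most `λ` graphs of size `λ` omitting `Γ` weakly embeds all
graphs of size `λ` omitting `Γ`. -/
theorem weak_complexity_ge_succ (Γ : Set (SimpleGraph ℕ)) (hne : Γ.Nonempty)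
    (hray : ∀ H ∈ Γ, HasRay H)
    (lam : Cardinal.{0}) (hlam : Cardinal.aleph0 ≤ lam)
    (ι : Type) (hι : Cardinal.mk ι ≤ lam)
    (F : ι → Σ V : Type, SimpleGraph V)
    (hcard : ∀ i, Cardinal.mk (F i).1 = lam)
    (homit : ∀ i, OmitsAll (F i).2 Γ) :
    ∃ (W : Type) (H : SimpleGraph W), Cardinal.mk W = lam ∧ OmitsAll H Γ ∧
      ∀ i, ¬ HasSubgraphCopy (F i).2 H := by
  obtain ⟨H₀, hH₀⟩ := hne
  set U : Type := lam.out with hU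
  have hmkU : Cardinal.mk U = lam := Cardinal.mk_out lam
  haveI : Infinite U := Cardinal.infinite_iff.mpr (by rw [hmkU]; exact hlam)
  have he : ∀ i, Nonempty ((F i).1 ≃ U) := fun i =>
    Cardinal.eq.mp (by rw [hmkU]; exact hcard i)
  let e : ∀ i, (F i).1 ≃ U := fun i => (he i).some
  let G' : ι → SimpleGraph U := fun i => (F i).2.comap (e i).symm
  have homit' : ∀ i, ¬ HasSubgraphCopy (G' i) H₀ := by
    rintro i ⟨f, finj, fadj⟩
    refine homit i H₀ hH₀ ⟨fun n => (e i).symm (f n), (e i).symm.injective.comp finj, ?_⟩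
    intro a b h
    exact fadj a b h
  refine ⟨Attempts G' H₀ ⊕ U, BigGraph G' H₀, ?_, ?_, ?_⟩
  · -- cardinality
    have h1 : Cardinal.mk (Attempts G' H₀) ≤ lam := by
      calc Cardinal.mk (Attempts G' H₀) ≤ Cardinal.mk (ι × List U) :=
            Cardinal.mk_subtype_le _
        _ = Cardinal.mk ι * Cardinal.mk (List U) := by
            rw [Cardinal.mk_prod, Cardinal.lift_id, Cardinal.lift_id]
        _ = Cardinal.mk ι * lam := by rw [Cardinal.mk_list_eq_mk, hmkU]
        _ ≤ lam * lam := mul_le_mul' hι le_rfl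
        _ = lam := Cardinal.mul_eq_self hlam
    rw [Cardinal.mk_sum, Cardinal.lift_id, Cardinal.lift_id, hmkU, add_comm]
    exact Cardinal.add_eq_left hlam h1
  · -- omits Γ
    rintro H' hH' ⟨f, finj, fadj⟩
    obtain ⟨r, rinj, radj⟩ := hray H' hH'
    exact bigGraph_no_ray G' H₀ homit'
      ⟨fun n => f (r n), finj.comp rinj, fun n => fadj _ _ (radj n)⟩
  · -- not embeddable into any F i
    rintro i ⟨f, finj, fadj⟩
    refine bigGraph_no_copy G' H₀ i (homit' i)
      ⟨fun w => e i (f w), (e i).injective.comp finj, ?_⟩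
    intro a b h
    show (F i).2.Adj ((e i).symm (e i (f a))) ((e i).symm (e i (f b)))
    rw [Equiv.symm_apply_apply, Equiv.symm_apply_apply]
    exact fadj a b h
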